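/- Let n ≥ 2 be an integer and s ∈ (0,1). There exists a constant C = C(n,s) > 0 such that for every y, ξ ∈ ℝ^n_+ and z > 0, the full gradient of G_s with respect to the variables (y,z) satisfies |∇_{(y,z)} G_s((y,z),ξ)| ≤ C · (|y−ξ|² + z²)^{−(n−2s+1)/2} · min( 1, y_n ξ_n/(|y−ξ|² + z²) + ξ_n/(|y−ξ|² + z²)^{1/2} ). -/

import Mathlib

open MeasureTheory Real Set

/-- The last coordinate `y_n` of a point `y ∈ ℝ^n`. -/
noncomputable def lastCoord {n : ℕ} (y : EuclideanSpace ℝ (Fin n)) : ℝ :=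
  if h : 0 < n then y ⟨n - 1, Nat.sub_lt h one_pos⟩ else 0

/-- The kernel `G_s((y,z),ξ)`. -/
noncomputable def GKer (n : ℕ) (s : ℝ) (y : EuclideanSpace ℝ (Fin n)) (z : ℝ)
    (ξ : EuclideanSpace ℝ (Fin n)) : ℝ :=
  (‖y - ξ‖ ^ 2 + z ^ 2) ^ (-((n : ℝ) - 2 * s) / 2) *
    (1 - (1 + 4 * lastCoord y * lastCoord ξ / (‖y - ξ‖ ^ 2 + z ^ 2)) ^ ((2 * s - (n : ℝ)) / 2))

lemma coord_le_norm {n : ℕ} (v : EuclideanSpace ℝ (Fin n)) (i : Fin n) : |v i| ≤ ‖v‖ := by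
  rw [EuclideanSpace.norm_eq, ← Real.sqrt_sq_eq_abs]
  apply Real.sqrt_le_sqrt
  have := Finset.single_le_sum (f := fun j => v j ^ 2) (fun j _ => sq_nonneg _)
    (Finset.mem_univ i)
  simpa using this

lemma rpow_neg_sub_le {a δ γ : ℝ} (ha : 0 < a) (hδ : 0 ≤ δ) (hγ : 1 ≤ γ) :
    a ^ (-γ) - (a + δ) ^ (-γ) ≤ γ * δ * a ^ (-γ - 1) := by
  set b := a + δ with hb
  have hab : a ≤ b := by simp [hb, hδ]
  have hbpos : 0 < b := lt_of_lt_of_le ha hab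
  have hs : -1 ≤ a / b - 1 := by
    have : 0 ≤ a / b := div_nonneg ha.le hbpos.le
    linarith
  have hbern := one_add_mul_self_le_rpow_one_add hs hγ
  rw [add_sub_cancel] at hbern
  have hdiv : (a / b) ^ γ = a ^ γ / b ^ γ := Real.div_rpow ha.le hbpos.le γ
  rw [hdiv] at hbern
  have h1 : 1 - a ^ γ / b ^ γ ≤ γ * (1 - a / b) := by linarith
  have h2 : 1 - a / b = δ / b := by
    field_simp
    rw [hb]; ring
  rw [h2] at h1
  have haγ : (0:ℝ) < a ^ γ := Real.rpow_pos_of_pos ha γ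
  have hbγ : (0:ℝ) < b ^ γ := Real.rpow_pos_of_pos hbpos γ
  have key : a ^ (-γ) - b ^ (-γ) = (1 - a ^ γ / b ^ γ) * a ^ (-γ) := by
    have hbi : b ^ (-γ) = (b ^ γ)⁻¹ := by rw [Real.rpow_neg hbpos.le]
    have hone : a ^ γ * a ^ (-γ) = 1 := by
      rw [← Real.rpow_add ha]; simp
    rw [sub_mul, one_mul, div_mul_eq_mul_div, hone, hbi, one_div]
  rw [key]
  have haneg : (0:ℝ) < a ^ (-γ) := Real.rpow_pos_of_pos ha _
  calc (1 - a ^ γ / b ^ γ) * a ^ (-γ) ≤ (γ * (δ / b)) * a ^ (-γ) := by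
        apply mul_le_mul_of_nonneg_right h1 haneg.le
    _ ≤ (γ * (δ / a)) * a ^ (-γ) := by
        apply mul_le_mul_of_nonneg_right _ haneg.le
        apply mul_le_mul_of_nonneg_left _ (by linarith)
        exact div_le_div_of_nonneg_left hδ ha hab
    _ = γ * δ * a ^ (-γ - 1) := by
        rw [Real.rpow_sub ha, Real.rpow_one]
        field_simp


lemma absL_bound {α A1 A2 r η X K N : ℝ} (hα : α < 0) (hD : 0 ≤ A1 - A2) (hA2 : 0 ≤ A2)
    (hη : 0 ≤ η) (hr : 0 ≤ r) (hX : |X| ≤ 4 * r * N) (hK : |K| ≤ N) :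
    |α * (A1 - A2) * X - α * A2 * (4 * η) * K| ≤
      ((-α) * (A1 - A2) * (4 * r) + (-α) * A2 * (4 * η)) * N := by
  have h1 : |α * (A1 - A2) * X - α * A2 * (4 * η) * K|
      ≤ |α * (A1 - A2) * X| + |α * A2 * (4 * η) * K| := by
    rw [sub_eq_add_neg]
    exact (abs_add_le _ _).trans (by rw [abs_neg])
  have h2 : |α * (A1 - A2) * X| = (-α) * (A1 - A2) * |X| := by
    rw [abs_mul, abs_mul, abs_of_neg hα, abs_of_nonneg hD]
  have h3 : |α * A2 * (4 * η) * K| = (-α) * A2 * (4 * η) * |K| := by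
    rw [abs_mul, abs_mul, abs_mul, abs_of_neg hα, abs_of_nonneg hA2,
      abs_of_nonneg (by linarith : (0:ℝ) ≤ 4 * η)]
  have h4 : (-α) * (A1 - A2) * |X| ≤ (-α) * (A1 - A2) * (4 * r * N) :=
    mul_le_mul_of_nonneg_left hX (mul_nonneg (by linarith) hD)
  have h5 : (-α) * A2 * (4 * η) * |K| ≤ (-α) * A2 * (4 * η) * N :=
    mul_le_mul_of_nonneg_left hK
      (mul_nonneg (mul_nonneg (by linarith) hA2) (by linarith))
  calc |α * (A1 - A2) * X - α * A2 * (4 * η) * K|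
      ≤ |α * (A1 - A2) * X| + |α * A2 * (4 * η) * K| := h1
    _ = (-α) * (A1 - A2) * |X| + (-α) * A2 * (4 * η) * |K| := by rw [h2, h3]
    _ ≤ (-α) * (A1 - A2) * (4 * r * N) + (-α) * A2 * (4 * η) * N := by linarith
    _ = ((-α) * (A1 - A2) * (4 * r) + (-α) * A2 * (4 * η)) * N := by ring

lemma absDQ_bound {I X z r N : ℝ} (hI : |I| ≤ r * N) (hX : |X| ≤ N) (hz : 0 < z)
    (hzr : z ≤ r) (hN : 0 ≤ N) : |2 * I + (2 * z) * X| ≤ 4 * r * N := by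
  have h1 := abs_add_le (2 * I) ((2 * z) * X)
  rw [abs_mul, abs_mul, abs_of_nonneg (by norm_num : (0:ℝ) ≤ 2),
    abs_of_nonneg (by linarith : (0:ℝ) ≤ 2 * z)] at h1
  nlinarith [abs_nonneg X, abs_nonneg I]

lemma main_estimate {B d u η r α γ A1 A2 : ℝ} (hα : α < 0) (hγdef : γ = 1 - α)
    (hB : 0 < B) (hu : 0 < u) (hη : 0 < η) (hddef : d = 4 * η * u) (hr : 0 < r)
    (hr2 : r ^ 2 = B) (hcoord : |u - η| ≤ r) (hA1def : A1 = B ^ (α - 1))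
    (hA2def : A2 = (B + d) ^ (α - 1)) :
    (-α) * (A1 - A2) * (4 * r) + (-α) * A2 * (4 * η) ≤
      24 * γ * (-α) * (A1 * r) * min 1 (u * η / B + η / r) := by
  have hγ : 1 ≤ γ := by rw [hγdef]; linarith
  have hd : 0 < d := by rw [hddef]; positivity
  have hBd : 0 < B + d := by linarith
  have hA1 : 0 < A1 := by rw [hA1def]; exact Real.rpow_pos_of_pos hB _
  have hA2 : 0 < A2 := by rw [hA2def]; exact Real.rpow_pos_of_pos hBd _
  have hA2le : A2 ≤ A1 := by
    rw [hA1def, hA2def]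
    exact Real.rpow_le_rpow_of_nonpos hB (by linarith) (by linarith)
  have hnα : 0 < -α := by linarith
  set M : ℝ := min 1 (u * η / B + η / r) with hMdef
  have hMpos : 0 < M := lt_min one_pos (by positivity)
  have claim1 : (A1 - A2) * (4 * r) ≤ 16 * γ * (A1 * r) * M := by
    rcases le_or_gt (u * η / B + η / r) 1 with hc | hc
    · have hMeq : M = u * η / B + η / r := min_eq_right hc
      have hD2 : A1 - A2 ≤ γ * d * (A1 / B) := by
        have hber := rpow_neg_sub_le hB hd.le hγ
        rw [show -γ = α - 1 from by rw [hγdef]; ring] at hber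
        have e9 : B ^ (α - 1 - 1) = B ^ (α - 1) / B := by
          rw [Real.rpow_sub hB (α - 1) 1, Real.rpow_one]
        rw [e9] at hber
        rw [hA1def, hA2def]
        exact hber
      calc (A1 - A2) * (4 * r) ≤ (γ * d * (A1 / B)) * (4 * r) :=
            mul_le_mul_of_nonneg_right hD2 (by positivity)
        _ = 16 * γ * (A1 * r) * (u * η / B) := by
            rw [hddef]; field_simp; ring
        _ ≤ 16 * γ * (A1 * r) * M := by
            rw [hMeq]
            apply mul_le_mul_of_nonneg_left _ (by positivity)
            have : 0 ≤ η / r := by positivity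
            linarith
    · have hMeq : M = 1 := min_eq_left hc.le
      rw [hMeq, mul_one]
      have e8 : 0 ≤ (γ - 1) * (A1 * r) := mul_nonneg (by linarith) (mul_pos hA1 hr).le
      nlinarith [mul_nonneg hA2.le hr.le, mul_pos hA1 hr]
  have claim2 : η * A2 ≤ 2 * (A1 * r) * M := by
    rcases le_or_gt (u * η / B + η / r) 1 with hc | hc
    · have hMeq : M = u * η / B + η / r := min_eq_right hc
      rw [hMeq]
      have e1 : η * A2 ≤ η * A1 := mul_le_mul_of_nonneg_left hA2le hη.le
      have e2 : η * A1 = (A1 * r) * (η / r) := by field_simp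
      have e3 : (A1 * r) * (η / r) ≤ (A1 * r) * (u * η / B + η / r) := by
        apply mul_le_mul_of_nonneg_left _ (by positivity)
        have : 0 ≤ u * η / B := by positivity
        linarith
      have h0 : 0 ≤ (A1 * r) * (u * η / B + η / r) := by positivity
      linarith
    · have hMeq : M = 1 := min_eq_left hc.le
      rw [hMeq, mul_one]
      rcases le_or_gt η (2 * r) with hη2 | hη2
      · calc η * A2 ≤ (2 * r) * A1 := mul_le_mul hη2 hA2le hA2.le (by positivity)
          _ = 2 * (A1 * r) := by ring
      · have hu2 : η / 2 ≤ u := by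
          rcases abs_le.mp hcoord with ⟨hl, hu'⟩
          linarith
        have hd2 : 2 * η ^ 2 ≤ B + d := by
          rw [hddef]
          nlinarith [mul_nonneg hη.le (by linarith : (0:ℝ) ≤ u - η / 2)]
        have hη2pos : (0:ℝ) < η ^ 2 := by positivity
        have hA2b : A2 ≤ (η ^ 2) ^ (α - 1) := by
          rw [hA2def]
          exact Real.rpow_le_rpow_of_nonpos hη2pos
            (by nlinarith [sq_nonneg η]) (by linarith)
        have hpow2 : ∀ t : ℝ, 0 < t → t * (t ^ 2) ^ (α - 1) = t ^ (2 * α - 1) := by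
          intro t ht
          rw [← Real.rpow_natCast t 2, ← Real.rpow_mul ht.le]
          nth_rewrite 1 [← Real.rpow_one t]
          rw [← Real.rpow_add ht]
          norm_num
          ring_nf
        have hrη : η ^ (2 * α - 1) ≤ r ^ (2 * α - 1) :=
          Real.rpow_le_rpow_of_nonpos hr (by linarith) (by linarith)
        have hBA : (r ^ 2) ^ (α - 1) = A1 := by rw [hr2, hA1def]
        have e5 := hpow2 η hη
        have e6 := hpow2 r hr
        have e7 : η * A2 ≤ η * (η ^ 2) ^ (α - 1) := mul_le_mul_of_nonneg_left hA2b hη.le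
        have e8 : r * (r ^ 2) ^ (α - 1) = r * A1 := by rw [hBA]
        linarith [e7, e5, hrη, e6, e8, (mul_pos hA1 hr).le]
  have e1 := mul_le_mul_of_nonneg_left claim1 hnα.le
  have e2 := mul_le_mul_of_nonneg_left claim2 hnα.le
  have e3 : 0 ≤ (-α) * ((A1 * r) * M) :=
    mul_nonneg hnα.le (mul_nonneg (mul_pos hA1 hr).le hMpos.le)
  calc (-α) * (A1 - A2) * (4 * r) + (-α) * A2 * (4 * η)
      = (-α) * ((A1 - A2) * (4 * r)) + 4 * ((-α) * (η * A2)) := by ring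
    _ ≤ (-α) * (16 * γ * (A1 * r) * M) + 4 * ((-α) * (2 * (A1 * r) * M)) := by linarith
    _ = (16 * γ + 8) * ((-α) * ((A1 * r) * M)) := by ring
    _ ≤ (24 * γ) * ((-α) * ((A1 * r) * M)) :=
        mul_le_mul_of_nonneg_right (by linarith) e3
    _ = 24 * γ * (-α) * (A1 * r) * M := by ring

set_option maxHeartbeats 1000000 in
theorem stmt4 (n : ℕ) (hn : 2 ≤ n) (s : ℝ) (hs0 : 0 < s) (hs1 : s < 1) :
    ∃ C > (0 : ℝ), ∀ y ξ : EuclideanSpace ℝ (Fin n),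
      0 < lastCoord y → 0 < lastCoord ξ → ∀ z : ℝ, 0 < z →
        ‖fderiv ℝ (fun p : EuclideanSpace ℝ (Fin n) × ℝ => GKer n s p.1 p.2 ξ) (y, z)‖ ≤
          C * (‖y - ξ‖ ^ 2 + z ^ 2) ^ (-((n : ℝ) - 2 * s + 1) / 2) *
            min 1 (lastCoord y * lastCoord ξ / (‖y - ξ‖ ^ 2 + z ^ 2) +
              lastCoord ξ / (‖y - ξ‖ ^ 2 + z ^ 2) ^ ((1 : ℝ) / 2)) := by
  have hnpos : 0 < n := by omega
  set i : Fin n := ⟨n - 1, Nat.sub_lt hnpos one_pos⟩ with hidef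
  have hlast : ∀ v : EuclideanSpace ℝ (Fin n), lastCoord v = v i := by
    intro v; rw [lastCoord, dif_pos hnpos]
  have hncast : (2:ℝ) ≤ (n:ℝ) := by exact_mod_cast hn
  set α : ℝ := (2 * s - (n:ℝ)) / 2 with hαdef
  have hα : α < 0 := div_neg_of_neg_of_pos (by linarith) two_pos
  set γ : ℝ := 1 - α with hγdef
  have hγ : 1 ≤ γ := by simp only [hγdef]; linarith
  refine ⟨24 * γ * (-α), by nlinarith, ?_⟩
  intro y ξ hy hξ z hz
  simp only [hlast] at hy hξ ⊢
  set u : ℝ := y i with hudef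
  set η : ℝ := ξ i with hηdef
  set B : ℝ := ‖y - ξ‖ ^ 2 + z ^ 2 with hBdef
  have hB : 0 < B := by positivity
  set d : ℝ := 4 * η * u with hddef
  have hd : 0 < d := by
    have h4 : (0:ℝ) < 4 * η := by linarith
    exact mul_pos h4 hy
  have hBd : 0 < B + d := by linarith
  set r : ℝ := Real.sqrt B with hrdef
  have hr : 0 < r := Real.sqrt_pos.mpr hB
  have hr2 : r ^ 2 = B := Real.sq_sqrt hB.le
  -- continuous linear maps
  set P1 : ((EuclideanSpace ℝ (Fin n)) × ℝ) →L[ℝ] (EuclideanSpace ℝ (Fin n)) := ContinuousLinearMap.fst ℝ (EuclideanSpace ℝ (Fin n)) ℝ with hP1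
  set P2 : ((EuclideanSpace ℝ (Fin n)) × ℝ) →L[ℝ] ℝ := ContinuousLinearMap.snd ℝ (EuclideanSpace ℝ (Fin n)) ℝ with hP2
  set DQ : ((EuclideanSpace ℝ (Fin n)) × ℝ) →L[ℝ] ℝ := (2 • ((innerSL ℝ (y - ξ)).comp P1)) + ((2 * z) • P2) with hDQ
  set Pn : ((EuclideanSpace ℝ (Fin n)) × ℝ) →L[ℝ] ℝ := (EuclideanSpace.proj i).comp P1 with hPn
  set L : ((EuclideanSpace ℝ (Fin n)) × ℝ) →L[ℝ] ℝ :=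
    (α * B ^ (α - 1)) • DQ - (α * (B + d) ^ (α - 1)) • (DQ + (4 * η) • Pn) with hL
  set g : (EuclideanSpace ℝ (Fin n)) × ℝ → ℝ := fun p =>
    (‖p.1 - ξ‖ ^ 2 + p.2 ^ 2) ^ α - (‖p.1 - ξ‖ ^ 2 + p.2 ^ 2 + 4 * η * p.1 i) ^ α with hgdef
  -- derivative of Q
  have hQ : HasFDerivAt (fun p : (EuclideanSpace ℝ (Fin n)) × ℝ => ‖p.1 - ξ‖ ^ 2 + p.2 ^ 2) DQ (y, z) := by
    have h1 : HasFDerivAt (fun p : (EuclideanSpace ℝ (Fin n)) × ℝ => p.1 - ξ) P1 (y, z) :=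
      (hasFDerivAt_fst).sub_const ξ
    have h2 := h1.norm_sq
    have h3 : HasFDerivAt (fun p : (EuclideanSpace ℝ (Fin n)) × ℝ => p.2 ^ 2) ((2 * z) • P2) (y, z) := by
      have h4 := (hasFDerivAt_snd (𝕜 := ℝ) (p := (y, z))).mul
        (hasFDerivAt_snd (𝕜 := ℝ) (p := (y, z)))
      have heq : (z : ℝ) • P2 + z • P2 = (2 * z) • P2 := by
        rw [← add_smul]; ring_nf
      simp only [pow_two]
      rw [← heq]
      exact h4
    exact h2.add h3
  -- derivative of the coordinate part
  have hu4 : HasFDerivAt (fun p : (EuclideanSpace ℝ (Fin n)) × ℝ => 4 * η * p.1 i) ((4 * η) • Pn) (y, z) := by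
    have h5 : HasFDerivAt (fun p : (EuclideanSpace ℝ (Fin n)) × ℝ => p.1 i) Pn (y, z) := Pn.hasFDerivAt
    exact h5.const_mul (4 * η)
  have hg1 : HasFDerivAt (fun p : (EuclideanSpace ℝ (Fin n)) × ℝ => (‖p.1 - ξ‖ ^ 2 + p.2 ^ 2) ^ α)
      ((α * B ^ (α - 1)) • DQ) (y, z) := by
    have hr1 : HasDerivAt (fun t : ℝ => t ^ α) (α * B ^ (α - 1)) B :=
      Real.hasDerivAt_rpow_const (Or.inl hB.ne')
    exact hr1.comp_hasFDerivAt (y, z) hQ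
  have hg2 : HasFDerivAt (fun p : (EuclideanSpace ℝ (Fin n)) × ℝ => (‖p.1 - ξ‖ ^ 2 + p.2 ^ 2 + 4 * η * p.1 i) ^ α)
      ((α * (B + d) ^ (α - 1)) • (DQ + (4 * η) • Pn)) (y, z) := by
    have hr1 : HasDerivAt (fun t : ℝ => t ^ α) (α * (B + d) ^ (α - 1)) (B + d) :=
      Real.hasDerivAt_rpow_const (Or.inl hBd.ne')
    exact hr1.comp_hasFDerivAt (y, z) (hQ.add hu4)
  have hg : HasFDerivAt g L (y, z) := hg1.sub hg2
  -- eventual equality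
  have hev : (fun p : (EuclideanSpace ℝ (Fin n)) × ℝ => GKer n s p.1 p.2 ξ) =ᶠ[nhds (y, z)] g := by
    have hopen : IsOpen {p : (EuclideanSpace ℝ (Fin n)) × ℝ | 0 < ‖p.1 - ξ‖ ^ 2 + p.2 ^ 2 ∧ 0 < p.1 i} := by
      apply IsOpen.inter
      · exact isOpen_lt continuous_const (((continuous_fst.sub continuous_const).norm.pow 2).add (continuous_snd.pow 2))
      · exact isOpen_lt continuous_const
          ((EuclideanSpace.proj i).continuous.comp continuous_fst)
    have hmem : (y, z) ∈ {p : (EuclideanSpace ℝ (Fin n)) × ℝ | 0 < ‖p.1 - ξ‖ ^ 2 + p.2 ^ 2 ∧ 0 < p.1 i} :=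
      ⟨hB, hy⟩
    filter_upwards [hopen.mem_nhds hmem] with p hp
    obtain ⟨hp1, hp2⟩ := hp
    simp only [g, GKer, hlast]
    have hexp : -((n:ℝ) - 2 * s) / 2 = α := by rw [hαdef]; ring
    rw [hexp]
    have h6 : (0:ℝ) ≤ 4 * p.1 i * η :=
      mul_nonneg (by nlinarith [hp2] : (0:ℝ) ≤ 4 * p.1 i) hξ.le
    have hfrac : (0:ℝ) ≤ 1 + 4 * p.1 i * η / (‖p.1 - ξ‖ ^ 2 + p.2 ^ 2) := by
      have := div_nonneg h6 hp1.le
      linarith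
    have hmul : (‖p.1 - ξ‖ ^ 2 + p.2 ^ 2) ^ α *
        (1 + 4 * p.1 i * η / (‖p.1 - ξ‖ ^ 2 + p.2 ^ 2)) ^ α
        = (‖p.1 - ξ‖ ^ 2 + p.2 ^ 2 + 4 * η * p.1 i) ^ α := by
      rw [← Real.mul_rpow hp1.le hfrac]
      congr 1
      field_simp
    rw [mul_sub, mul_one, hmul]
  have hfd : fderiv ℝ (fun p : (EuclideanSpace ℝ (Fin n)) × ℝ => GKer n s p.1 p.2 ξ) (y, z) = L := by
    rw [hev.fderiv_eq]
    exact hg.fderiv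
  rw [hfd]
  rw [show -((n:ℝ) - 2 * s + 1) / 2 = α - 1/2 from by rw [hαdef]; ring,
    ← Real.sqrt_eq_rpow, ← hrdef]
  set A1 : ℝ := B ^ (α - 1) with hA1def
  set A2 : ℝ := (B + d) ^ (α - 1) with hA2def
  have hη : 0 < η := hξ
  have hupos : 0 < u := hy
  have hA1 : 0 < A1 := Real.rpow_pos_of_pos hB _
  have hA2 : 0 < A2 := Real.rpow_pos_of_pos hBd _
  have hA2le : A2 ≤ A1 := Real.rpow_le_rpow_of_nonpos hB (by linarith) (by linarith)
  have hDnn : 0 ≤ A1 - A2 := by linarith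
  have hnα : 0 < -α := by linarith
  have hsqB : ‖y - ξ‖ ^ 2 ≤ B := by
    rw [hBdef]
    exact le_add_of_nonneg_right (sq_nonneg z)
  have hsqz : z ^ 2 ≤ B := by
    rw [hBdef]
    exact le_add_of_nonneg_left (sq_nonneg _)
  have hyxr : ‖y - ξ‖ ≤ r := by
    calc ‖y - ξ‖ = Real.sqrt (‖y - ξ‖ ^ 2) := (Real.sqrt_sq (norm_nonneg _)).symm
      _ ≤ Real.sqrt B := Real.sqrt_le_sqrt hsqB
      _ = r := hrdef.symm
  have hzr : z ≤ r := by
    calc z = Real.sqrt (z ^ 2) := (Real.sqrt_sq hz.le).symm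
      _ ≤ Real.sqrt B := Real.sqrt_le_sqrt hsqz
      _ = r := hrdef.symm
  -- pointwise formulas
  have hDQh : ∀ h : (EuclideanSpace ℝ (Fin n)) × ℝ,
      DQ h = 2 * (inner ℝ (y - ξ) h.1 : ℝ) + (2 * z) * h.2 := by
    intro h
    rw [hDQ]
    simp only [ContinuousLinearMap.add_apply, ContinuousLinearMap.smul_apply,
      ContinuousLinearMap.comp_apply, ContinuousLinearMap.coe_fst', ContinuousLinearMap.coe_snd',
      innerSL_apply_apply, smul_eq_mul, nsmul_eq_mul, hP1, hP2]
    push_cast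
    ring
  have hPnh : ∀ h : (EuclideanSpace ℝ (Fin n)) × ℝ, Pn h = h.1 i := by
    intro h
    simp [hPn, hP1]
  have hLh : ∀ h : (EuclideanSpace ℝ (Fin n)) × ℝ,
      L h = α * (A1 - A2) * (DQ h) - α * A2 * (4 * η) * (h.1 i) := by
    intro h
    rw [hL]
    simp only [ContinuousLinearMap.coe_sub', Pi.sub_apply, ContinuousLinearMap.smul_apply,
      ContinuousLinearMap.add_apply, smul_eq_mul]
    rw [hPnh]
    ring
  -- operator norm bound
  have hbound : ‖L‖ ≤ (-α) * (A1 - A2) * (4 * r) + (-α) * A2 * (4 * η) := by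
    apply ContinuousLinearMap.opNorm_le_bound
    · have h1 : (0:ℝ) ≤ (-α) * (A1 - A2) * (4 * r) :=
        mul_nonneg (mul_nonneg hnα.le hDnn) (by linarith)
      have h2 : (0:ℝ) ≤ (-α) * A2 * (4 * η) :=
        mul_nonneg (mul_nonneg hnα.le hA2.le) (by linarith)
      linarith
    · intro h
      have b1 : |(inner ℝ (y - ξ) h.1 : ℝ)| ≤ r * ‖h‖ := by
        calc |(inner ℝ (y - ξ) h.1 : ℝ)| ≤ ‖y - ξ‖ * ‖h.1‖ := abs_real_inner_le_norm _ _
          _ ≤ r * ‖h‖ := mul_le_mul hyxr (norm_fst_le h) (norm_nonneg _) hr.le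
      have b2 : |h.2| ≤ ‖h‖ := by
        have := norm_snd_le h
        rwa [Real.norm_eq_abs] at this
      have b3 : |h.1 i| ≤ ‖h‖ := (coord_le_norm h.1 i).trans (norm_fst_le h)
      have hXb : |DQ h| ≤ 4 * r * ‖h‖ := by
        rw [hDQh]
        exact absDQ_bound b1 b2 hz hzr (norm_nonneg h)
      rw [Real.norm_eq_abs, hLh h]
      exact absL_bound hα hDnn hA2.le hη.le hr.le hXb b3
  have hcoord : |u - η| ≤ r := by
    have h4 := coord_le_norm (y - ξ) i
    have h5 : (y - ξ) i = u - η := rfl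
    rw [h5] at h4
    linarith
  have hkey := main_estimate hα hγdef hB hupos hη hddef hr hr2 hcoord hA1def hA2def
  have hpowsplit : B ^ (α - 1/2) = A1 * r := by
    rw [show α - 1/2 = (α - 1) + 1/2 from by ring, Real.rpow_add hB, ← Real.sqrt_eq_rpow,
      hA1def, hrdef]
  calc ‖L‖ ≤ (-α) * (A1 - A2) * (4 * r) + (-α) * A2 * (4 * η) := hbound
    _ ≤ 24 * γ * (-α) * (A1 * r) * min 1 (u * η / B + η / r) := hkey
    _ = 24 * γ * (-α) * B ^ (α - 1/2) * min 1 (u * η / B + η / r) := by rw [hpowsplit]
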